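/- In the Gaudin realization, the generating function of integrals of motion is invariant under the global osp(1|2) action: for every λ ∈ ℂ ∖ {z₁,…,z_N} and every Y ∈ {h, X⁺, X⁻, v⁺, v⁻}, the global generator Y_gl = Σ_{a=1}^{N} Y_a commutes with t(λ), i.e. [t(λ), Y_gl] = 0. -/

import Mathlib

/-- osp(1|2) Gaudin model data: sites, inhomogeneity parameters, and local
osp(1|2) operators with super-commutation relations across sites. -/
structure OspGaudinData (N : ℕ) (H : Type*) [AddCommGroup H] [Module ℂ H] where
  z : Fin N → ℂ
  z_inj : Function.Injective z
  h : Fin N → Module.End ℂ H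
  Xp : Fin N → Module.End ℂ H
  Xm : Fin N → Module.End ℂ H
  vp : Fin N → Module.End ℂ H
  vm : Fin N → Module.End ℂ H
  rel_hXp : ∀ a, h a * Xp a - Xp a * h a = (2:ℂ) • Xp a
  rel_hXm : ∀ a, h a * Xm a - Xm a * h a = (-2:ℂ) • Xm a
  rel_XpXm : ∀ a, Xp a * Xm a - Xm a * Xp a = h a
  rel_hvp : ∀ a, h a * vp a - vp a * h a = vp a
  rel_hvm : ∀ a, h a * vm a - vm a * h a = -vm a
  rel_vpvm : ∀ a, vp a * vm a + vm a * vp a = -h a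
  rel_Xmvp : ∀ a, Xm a * vp a - vp a * Xm a = vm a
  rel_Xpvm : ∀ a, Xp a * vm a - vm a * Xp a = vp a
  rel_vpvp : ∀ a, vp a * vp a = Xp a
  rel_vmvm : ∀ a, vm a * vm a = -Xm a
  rel_Xpvp : ∀ a, Xp a * vp a = vp a * Xp a
  rel_Xmvm : ∀ a, Xm a * vm a = vm a * Xm a
  even_comm : ∀ a b, a ≠ b → ∀ Y ∈ ({h a, Xp a, Xm a} : Set (Module.End ℂ H)),
      ∀ Z ∈ ({h b, Xp b, Xm b, vp b, vm b} : Set (Module.End ℂ H)), Y * Z = Z * Y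
  odd_anticomm : ∀ a b, a ≠ b → ∀ Y ∈ ({vp a, vm a} : Set (Module.End ℂ H)),
      ∀ Z ∈ ({vp b, vm b} : Set (Module.End ℂ H)), Y * Z + Z * Y = 0

namespace OspGaudinData

variable {N : ℕ} {H : Type*} [AddCommGroup H] [Module ℂ H]

/-- The Gaudin realization h(λ). -/
noncomputable def hl (G : OspGaudinData N H) (lam : ℂ) : Module.End ℂ H :=
  ∑ a, ((lam - G.z a)⁻¹) • G.h a

noncomputable def Xpl (G : OspGaudinData N H) (lam : ℂ) : Module.End ℂ H :=
  ∑ a, ((lam - G.z a)⁻¹) • G.Xp a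

noncomputable def Xml (G : OspGaudinData N H) (lam : ℂ) : Module.End ℂ H :=
  ∑ a, ((lam - G.z a)⁻¹) • G.Xm a

noncomputable def vpl (G : OspGaudinData N H) (lam : ℂ) : Module.End ℂ H :=
  ∑ a, ((lam - G.z a)⁻¹) • G.vp a

noncomputable def vml (G : OspGaudinData N H) (lam : ℂ) : Module.End ℂ H :=
  ∑ a, ((lam - G.z a)⁻¹) • G.vm a

/-- h′(λ) = −Σ_a h_a/(λ − z_a)². -/
noncomputable def hl' (G : OspGaudinData N H) (lam : ℂ) : Module.End ℂ H :=
  -∑ a, (((lam - G.z a)^2)⁻¹) • G.h a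

/-- The generating function t(λ) of the integrals of motion. -/
noncomputable def tOp (G : OspGaudinData N H) (lam : ℂ) : Module.End ℂ H :=
  G.hl lam * G.hl lam + G.hl' lam + (4:ℂ) • (G.Xpl lam * G.Xml lam)
    + (2:ℂ) • (G.vpl lam * G.vml lam)

/-- The Gaudin Hamiltonian at site `a`. -/
noncomputable def Gham (G : OspGaudinData N H) (a : Fin N) : Module.End ℂ H :=
  ∑ b ∈ Finset.univ.erase a, ((G.z a - G.z b)⁻¹) •
    (G.h a * G.h b + (2:ℂ) • (G.Xp a * G.Xm b + G.Xm a * G.Xp b)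
      + (G.vp a * G.vm b - G.vm a * G.vp b))

end OspGaudinData

section aux
variable {N : ℕ} {R : Type*} [Ring R] [Module ℂ R] [SMulCommClass ℂ R R] [IsScalarTower ℂ R R]

lemma gaudin_comm_sum (u v : Fin N → ℂ) (Y W : Fin N → R)
    (hc : ∀ a b, a ≠ b → Y a * W b = W b * Y a) :
    (∑ a, u a • Y a) * (∑ b, v b • W b) - (∑ b, v b • W b) * (∑ a, u a • Y a)
      = ∑ a, (u a * v a) • (Y a * W a - W a * Y a) := by
  have h1 : (∑ a, u a • Y a) * (∑ b, v b • W b)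
      = ∑ a, ∑ b, (u a * v b) • (Y a * W b) := by
    rw [Finset.sum_mul]
    refine Finset.sum_congr rfl fun a _ => ?_
    rw [Finset.mul_sum]
    refine Finset.sum_congr rfl fun b _ => ?_
    rw [smul_mul_assoc, mul_smul_comm, smul_smul]
  have h2 : (∑ b, v b • W b) * (∑ a, u a • Y a)
      = ∑ a, ∑ b, (u a * v b) • (W b * Y a) := by
    rw [Finset.mul_sum]
    refine Finset.sum_congr rfl fun a _ => ?_
    rw [Finset.sum_mul]
    refine Finset.sum_congr rfl fun b _ => ?_
    rw [smul_mul_assoc, mul_smul_comm, smul_smul, mul_comm (v b)]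
  rw [h1, h2, ← Finset.sum_sub_distrib]
  refine Finset.sum_congr rfl fun a _ => ?_
  rw [← Finset.sum_sub_distrib]
  rw [Finset.sum_eq_single a
    (fun b _ hb => by rw [← smul_sub, hc a b (Ne.symm hb), sub_self, smul_zero])
    (fun ha => absurd (Finset.mem_univ a) ha)]
  rw [← smul_sub]

lemma gaudin_acomm_sum (u v : Fin N → ℂ) (Y W : Fin N → R)
    (hc : ∀ a b, a ≠ b → Y a * W b + W b * Y a = 0) :
    (∑ a, u a • Y a) * (∑ b, v b • W b) + (∑ b, v b • W b) * (∑ a, u a • Y a)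
      = ∑ a, (u a * v a) • (Y a * W a + W a * Y a) := by
  have h1 : (∑ a, u a • Y a) * (∑ b, v b • W b)
      = ∑ a, ∑ b, (u a * v b) • (Y a * W b) := by
    rw [Finset.sum_mul]
    refine Finset.sum_congr rfl fun a _ => ?_
    rw [Finset.mul_sum]
    refine Finset.sum_congr rfl fun b _ => ?_
    rw [smul_mul_assoc, mul_smul_comm, smul_smul]
  have h2 : (∑ b, v b • W b) * (∑ a, u a • Y a)
      = ∑ a, ∑ b, (u a * v b) • (W b * Y a) := by
    rw [Finset.mul_sum]
    refine Finset.sum_congr rfl fun a _ => ?_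
    rw [Finset.sum_mul]
    refine Finset.sum_congr rfl fun b _ => ?_
    rw [smul_mul_assoc, mul_smul_comm, smul_smul, mul_comm (v b)]
  rw [h1, h2, ← Finset.sum_add_distrib]
  refine Finset.sum_congr rfl fun a _ => ?_
  rw [← Finset.sum_add_distrib]
  rw [Finset.sum_eq_single a
    (fun b _ hb => by rw [← smul_add, hc a b (Ne.symm hb), smul_zero])
    (fun ha => absurd (Finset.mem_univ a) ha)]
  rw [← smul_add]

lemma gaudin_comm_one (u : Fin N → ℂ) (Y W : Fin N → R)
    (hc : ∀ a b, a ≠ b → Y a * W b = W b * Y a) :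
    (∑ a, u a • Y a) * (∑ b, W b) - (∑ b, W b) * (∑ a, u a • Y a)
      = ∑ a, u a • (Y a * W a - W a * Y a) := by
  have := gaudin_comm_sum u (fun _ => (1:ℂ)) Y W hc
  simpa using this

lemma gaudin_acomm_one (u : Fin N → ℂ) (Y W : Fin N → R)
    (hc : ∀ a b, a ≠ b → Y a * W b + W b * Y a = 0) :
    (∑ a, u a • Y a) * (∑ b, W b) + (∑ b, W b) * (∑ a, u a • Y a)
      = ∑ a, u a • (Y a * W a + W a * Y a) := by
  have := gaudin_acomm_sum u (fun _ => (1:ℂ)) Y W hc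
  simpa using this

lemma gaudin_expand_even (A C D E F G S : R) :
    (A*A + C + (4:ℂ)•(D*E) + (2:ℂ)•(F*G))*S - S*(A*A + C + (4:ℂ)•(D*E) + (2:ℂ)•(F*G))
      = A*(A*S - S*A) + (A*S - S*A)*A + (C*S - S*C)
        + (4:ℂ)•(D*(E*S - S*E) + (D*S - S*D)*E)
        + (2:ℂ)•(F*(G*S - S*G) + (F*S - S*F)*G) := by
  simp only [add_mul, mul_add, sub_mul, mul_sub, smul_mul_assoc, mul_smul_comm, smul_add,
    smul_sub, mul_assoc]
  module

lemma gaudin_expand_odd (A C D E F G S : R) :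
    (A*A + C + (4:ℂ)•(D*E) + (2:ℂ)•(F*G))*S - S*(A*A + C + (4:ℂ)•(D*E) + (2:ℂ)•(F*G))
      = A*(A*S - S*A) + (A*S - S*A)*A + (C*S - S*C)
        + (4:ℂ)•(D*(E*S - S*E) + (D*S - S*D)*E)
        + (2:ℂ)•(F*(G*S + S*G) - (F*S + S*F)*G) := by
  simp only [add_mul, mul_add, sub_mul, mul_sub, smul_mul_assoc, mul_smul_comm, smul_add,
    smul_sub, mul_assoc]
  module

theorem gaudin_key (c : Fin N → ℂ) (h Xp Xm vp vm : Fin N → R)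
    (rel_hXp : ∀ a, h a * Xp a - Xp a * h a = (2:ℂ) • Xp a)
    (rel_hXm : ∀ a, h a * Xm a - Xm a * h a = (-2:ℂ) • Xm a)
    (rel_XpXm : ∀ a, Xp a * Xm a - Xm a * Xp a = h a)
    (rel_hvp : ∀ a, h a * vp a - vp a * h a = vp a)
    (rel_hvm : ∀ a, h a * vm a - vm a * h a = -vm a)
    (rel_vpvm : ∀ a, vp a * vm a + vm a * vp a = -h a)
    (rel_Xmvp : ∀ a, Xm a * vp a - vp a * Xm a = vm a)
    (rel_Xpvm : ∀ a, Xp a * vm a - vm a * Xp a = vp a)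
    (rel_vpvp : ∀ a, vp a * vp a = Xp a)
    (rel_vmvm : ∀ a, vm a * vm a = -Xm a)
    (rel_Xpvp : ∀ a, Xp a * vp a = vp a * Xp a)
    (rel_Xmvm : ∀ a, Xm a * vm a = vm a * Xm a)
    (ec : ∀ a b, a ≠ b → ∀ Y ∈ ({h a, Xp a, Xm a} : Set R),
        ∀ Z ∈ ({h b, Xp b, Xm b, vp b, vm b} : Set R), Y * Z = Z * Y)
    (oc : ∀ a b, a ≠ b → ∀ Y ∈ ({vp a, vm a} : Set R),
        ∀ Z ∈ ({vp b, vm b} : Set R), Y * Z + Z * Y = 0)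
    (T : R)
    (hT : T = (∑ a, c a • h a) * (∑ a, c a • h a) + (-∑ a, (c a * c a) • h a)
        + (4:ℂ) • ((∑ a, c a • Xp a) * (∑ a, c a • Xm a))
        + (2:ℂ) • ((∑ a, c a • vp a) * (∑ a, c a • vm a))) :
    (T * (∑ a, h a) - (∑ a, h a) * T = 0) ∧
    (T * (∑ a, Xp a) - (∑ a, Xp a) * T = 0) ∧
    (T * (∑ a, Xm a) - (∑ a, Xm a) * T = 0) ∧
    (T * (∑ a, vp a) - (∑ a, vp a) * T = 0) ∧
    (T * (∑ a, vm a) - (∑ a, vm a) * T = 0) := by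
  subst hT
  -- memberships
  have m3h : ∀ a : Fin N, h a ∈ ({h a, Xp a, Xm a} : Set R) := fun a => Set.mem_insert _ _
  have m3p : ∀ a : Fin N, Xp a ∈ ({h a, Xp a, Xm a} : Set R) :=
    fun a => Set.mem_insert_of_mem _ (Set.mem_insert _ _)
  have m3m : ∀ a : Fin N, Xm a ∈ ({h a, Xp a, Xm a} : Set R) :=
    fun a => Set.mem_insert_of_mem _ (Set.mem_insert_of_mem _ rfl)
  have m5h : ∀ b : Fin N, h b ∈ ({h b, Xp b, Xm b, vp b, vm b} : Set R) :=
    fun b => Set.mem_insert _ _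
  have m5p : ∀ b : Fin N, Xp b ∈ ({h b, Xp b, Xm b, vp b, vm b} : Set R) :=
    fun b => Set.mem_insert_of_mem _ (Set.mem_insert _ _)
  have m5m : ∀ b : Fin N, Xm b ∈ ({h b, Xp b, Xm b, vp b, vm b} : Set R) :=
    fun b => Set.mem_insert_of_mem _ (Set.mem_insert_of_mem _ (Set.mem_insert _ _))
  have m5vp : ∀ b : Fin N, vp b ∈ ({h b, Xp b, Xm b, vp b, vm b} : Set R) :=
    fun b => Set.mem_insert_of_mem _ (Set.mem_insert_of_mem _
      (Set.mem_insert_of_mem _ (Set.mem_insert _ _)))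
  have m5vm : ∀ b : Fin N, vm b ∈ ({h b, Xp b, Xm b, vp b, vm b} : Set R) :=
    fun b => Set.mem_insert_of_mem _ (Set.mem_insert_of_mem _
      (Set.mem_insert_of_mem _ (Set.mem_insert_of_mem _ rfl)))
  have m2p : ∀ a : Fin N, vp a ∈ ({vp a, vm a} : Set R) := fun a => Set.mem_insert _ _
  have m2m : ∀ a : Fin N, vm a ∈ ({vp a, vm a} : Set R) := fun a => Set.mem_insert_of_mem _ rfl
  -- helpers
  have pull : ∀ (w : Fin N → ℂ) (k : ℂ) (f : Fin N → R),
      (∑ a, w a • (k • f a)) = k • ∑ a, w a • f a := fun w k f => by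
    rw [Finset.smul_sum]; exact Finset.sum_congr rfl fun a _ => smul_comm _ _ _
  have negfact : ∀ (x S y : R), x*S - S*x = y → (-x)*S - S*(-x) = -y := fun x S y hxy => by
    rw [neg_mul, mul_neg, neg_sub_neg, ← hxy, neg_sub]
  have half : ∀ x y : R, (2:ℂ) • x = (2:ℂ) • y → x = y := fun x y hxy => by
    have := congrArg (fun z => (2⁻¹:ℂ) • z) hxy
    simpa [smul_smul, show ((2:ℂ)⁻¹ * 2 : ℂ) = 1 by norm_num] using this
  refine ⟨?_, ?_, ?_, ?_, ?_⟩
  -- Case 1 : S = ∑ h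
  · have A1 : (∑ a, c a • h a) * (∑ a, h a) - (∑ a, h a) * (∑ a, c a • h a) = 0 := by
      rw [gaudin_comm_one c h h (fun a b hab => ec a b hab _ (m3h a) _ (m5h b))]
      exact Finset.sum_eq_zero fun a _ => by rw [sub_self, smul_zero]
    have A2 : (∑ a, (c a * c a) • h a) * (∑ a, h a)
        - (∑ a, h a) * (∑ a, (c a * c a) • h a) = 0 := by
      rw [gaudin_comm_one (fun a => c a * c a) h h (fun a b hab => ec a b hab _ (m3h a) _ (m5h b))]
      exact Finset.sum_eq_zero fun a _ => by rw [sub_self, smul_zero]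
    have A2' : (-∑ a, (c a * c a) • h a) * (∑ a, h a)
        - (∑ a, h a) * (-∑ a, (c a * c a) • h a) = 0 := by
      simpa using negfact _ _ _ A2
    have A3 : (∑ a, c a • Xp a) * (∑ a, h a) - (∑ a, h a) * (∑ a, c a • Xp a)
        = (-2:ℂ) • ∑ a, c a • Xp a := by
      rw [gaudin_comm_one c Xp h (fun a b hab => ec a b hab _ (m3p a) _ (m5h b)),
        ← pull c (-2:ℂ) Xp]
      exact Finset.sum_congr rfl fun a _ => by
        rw [← neg_sub (h a * Xp a) (Xp a * h a), rel_hXp a, neg_smul]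
    have A4 : (∑ a, c a • Xm a) * (∑ a, h a) - (∑ a, h a) * (∑ a, c a • Xm a)
        = (2:ℂ) • ∑ a, c a • Xm a := by
      rw [gaudin_comm_one c Xm h (fun a b hab => ec a b hab _ (m3m a) _ (m5h b)),
        ← pull c (2:ℂ) Xm]
      exact Finset.sum_congr rfl fun a _ => by
        rw [← neg_sub (h a * Xm a) (Xm a * h a), rel_hXm a, neg_smul, neg_neg]
    have A5 : (∑ a, c a • vp a) * (∑ a, h a) - (∑ a, h a) * (∑ a, c a • vp a)
        = -(∑ a, c a • vp a) := by
      rw [gaudin_comm_one c vp h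
        (fun a b hab => (ec b a hab.symm _ (m3h b) _ (m5vp a)).symm)]
      rw [show (∑ a, c a • (vp a * h a - h a * vp a)) = ∑ a, -(c a • vp a) from
        Finset.sum_congr rfl fun a _ => by
          rw [← neg_sub (h a * vp a) (vp a * h a), rel_hvp a, smul_neg]]
      exact Finset.sum_neg_distrib _
    have A6 : (∑ a, c a • vm a) * (∑ a, h a) - (∑ a, h a) * (∑ a, c a • vm a)
        = ∑ a, c a • vm a := by
      rw [gaudin_comm_one c vm h
        (fun a b hab => (ec b a hab.symm _ (m3h b) _ (m5vm a)).symm)]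
      exact Finset.sum_congr rfl fun a _ => by
        rw [← neg_sub (h a * vm a) (vm a * h a), rel_hvm a, neg_neg]
    rw [gaudin_expand_even, A1, A2', A3, A4, A5, A6]
    simp only [mul_zero, zero_mul, add_zero, zero_add, mul_smul_comm, smul_mul_assoc,
      neg_mul, mul_neg, smul_neg, smul_smul]
    module
  -- Case 2 : S = ∑ Xp
  · have B1 : (∑ a, c a • h a) * (∑ a, Xp a) - (∑ a, Xp a) * (∑ a, c a • h a)
        = (2:ℂ) • ∑ a, c a • Xp a := by
      rw [gaudin_comm_one c h Xp (fun a b hab => ec a b hab _ (m3h a) _ (m5p b)),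
        ← pull c (2:ℂ) Xp]
      exact Finset.sum_congr rfl fun a _ => by rw [rel_hXp a]
    have B2 : (∑ a, (c a * c a) • h a) * (∑ a, Xp a)
        - (∑ a, Xp a) * (∑ a, (c a * c a) • h a)
        = (2:ℂ) • ∑ a, (c a * c a) • Xp a := by
      rw [gaudin_comm_one (fun a => c a * c a) h Xp
        (fun a b hab => ec a b hab _ (m3h a) _ (m5p b)),
        ← pull (fun a => c a * c a) (2:ℂ) Xp]
      exact Finset.sum_congr rfl fun a _ => by rw [rel_hXp a]
    have B2' : (-∑ a, (c a * c a) • h a) * (∑ a, Xp a)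
        - (∑ a, Xp a) * (-∑ a, (c a * c a) • h a)
        = -((2:ℂ) • ∑ a, (c a * c a) • Xp a) := negfact _ _ _ B2
    have B3 : (∑ a, c a • Xp a) * (∑ a, Xp a) - (∑ a, Xp a) * (∑ a, c a • Xp a) = 0 := by
      rw [gaudin_comm_one c Xp Xp (fun a b hab => ec a b hab _ (m3p a) _ (m5p b))]
      exact Finset.sum_eq_zero fun a _ => by rw [sub_self, smul_zero]
    have B4 : (∑ a, c a • Xm a) * (∑ a, Xp a) - (∑ a, Xp a) * (∑ a, c a • Xm a)
        = -(∑ a, c a • h a) := by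
      rw [gaudin_comm_one c Xm Xp (fun a b hab => ec a b hab _ (m3m a) _ (m5p b))]
      rw [show (∑ a, c a • (Xm a * Xp a - Xp a * Xm a)) = ∑ a, -(c a • h a) from
        Finset.sum_congr rfl fun a _ => by
          rw [← neg_sub (Xp a * Xm a) (Xm a * Xp a), rel_XpXm a, smul_neg]]
      exact Finset.sum_neg_distrib _
    have B5 : (∑ a, c a • vp a) * (∑ a, Xp a) - (∑ a, Xp a) * (∑ a, c a • vp a) = 0 := by
      rw [gaudin_comm_one c vp Xp
        (fun a b hab => (ec b a hab.symm _ (m3p b) _ (m5vp a)).symm)]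
      exact Finset.sum_eq_zero fun a _ => by rw [rel_Xpvp a, sub_self, smul_zero]
    have B6 : (∑ a, c a • vm a) * (∑ a, Xp a) - (∑ a, Xp a) * (∑ a, c a • vm a)
        = -(∑ a, c a • vp a) := by
      rw [gaudin_comm_one c vm Xp
        (fun a b hab => (ec b a hab.symm _ (m3p b) _ (m5vm a)).symm)]
      rw [show (∑ a, c a • (vm a * Xp a - Xp a * vm a)) = ∑ a, -(c a • vp a) from
        Finset.sum_congr rfl fun a _ => by
          rw [← neg_sub (Xp a * vm a) (vm a * Xp a), rel_Xpvm a, smul_neg]]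
      exact Finset.sum_neg_distrib _
    have B7 : (∑ a, c a • h a) * (∑ a, c a • Xp a) - (∑ a, c a • Xp a) * (∑ a, c a • h a)
        = (2:ℂ) • ∑ a, (c a * c a) • Xp a := by
      rw [gaudin_comm_sum c c h Xp (fun a b hab => ec a b hab _ (m3h a) _ (m5p b)),
        ← pull (fun a => c a * c a) (2:ℂ) Xp]
      exact Finset.sum_congr rfl fun a _ => by rw [rel_hXp a]
    have B7' : (∑ a, c a • h a) * (∑ a, c a • Xp a)
        = (2:ℂ) • (∑ a, (c a * c a) • Xp a) + (∑ a, c a • Xp a) * (∑ a, c a • h a) :=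
      sub_eq_iff_eq_add.mp B7
    have B8 : (∑ a, c a • vp a) * (∑ a, c a • vp a) = ∑ a, (c a * c a) • Xp a := by
      have e := gaudin_acomm_sum c c vp vp (fun a b hab => oc a b hab _ (m2p a) _ (m2p b))
      rw [show (∑ a, (c a * c a) • (vp a * vp a + vp a * vp a))
          = (2:ℂ) • ∑ a, (c a * c a) • Xp a from by
        rw [← pull (fun a => c a * c a) (2:ℂ) Xp]
        exact Finset.sum_congr rfl fun a _ => by rw [rel_vpvp a, two_smul ℂ (Xp a)]] at e
      exact half _ _ (by rw [two_smul]; exact e)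
    rw [gaudin_expand_even, B1, B2', B3, B4, B5, B6]
    simp only [mul_zero, zero_mul, add_zero, zero_add, mul_smul_comm, smul_mul_assoc,
      neg_mul, mul_neg, smul_neg, smul_smul]
    rw [B7', B8]
    module
  -- Case 3 : S = ∑ Xm
  · have C1 : (∑ a, c a • h a) * (∑ a, Xm a) - (∑ a, Xm a) * (∑ a, c a • h a)
        = (-2:ℂ) • ∑ a, c a • Xm a := by
      rw [gaudin_comm_one c h Xm (fun a b hab => ec a b hab _ (m3h a) _ (m5m b)),
        ← pull c (-2:ℂ) Xm]
      exact Finset.sum_congr rfl fun a _ => by rw [rel_hXm a]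
    have C2 : (∑ a, (c a * c a) • h a) * (∑ a, Xm a)
        - (∑ a, Xm a) * (∑ a, (c a * c a) • h a)
        = (-2:ℂ) • ∑ a, (c a * c a) • Xm a := by
      rw [gaudin_comm_one (fun a => c a * c a) h Xm
        (fun a b hab => ec a b hab _ (m3h a) _ (m5m b)),
        ← pull (fun a => c a * c a) (-2:ℂ) Xm]
      exact Finset.sum_congr rfl fun a _ => by rw [rel_hXm a]
    have C2' : (-∑ a, (c a * c a) • h a) * (∑ a, Xm a)
        - (∑ a, Xm a) * (-∑ a, (c a * c a) • h a)
        = -((-2:ℂ) • ∑ a, (c a * c a) • Xm a) := negfact _ _ _ C2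
    have C3 : (∑ a, c a • Xp a) * (∑ a, Xm a) - (∑ a, Xm a) * (∑ a, c a • Xp a)
        = ∑ a, c a • h a := by
      rw [gaudin_comm_one c Xp Xm (fun a b hab => ec a b hab _ (m3p a) _ (m5m b))]
      exact Finset.sum_congr rfl fun a _ => by rw [rel_XpXm a]
    have C4 : (∑ a, c a • Xm a) * (∑ a, Xm a) - (∑ a, Xm a) * (∑ a, c a • Xm a) = 0 := by
      rw [gaudin_comm_one c Xm Xm (fun a b hab => ec a b hab _ (m3m a) _ (m5m b))]
      exact Finset.sum_eq_zero fun a _ => by rw [sub_self, smul_zero]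
    have C5 : (∑ a, c a • vp a) * (∑ a, Xm a) - (∑ a, Xm a) * (∑ a, c a • vp a)
        = -(∑ a, c a • vm a) := by
      rw [gaudin_comm_one c vp Xm
        (fun a b hab => (ec b a hab.symm _ (m3m b) _ (m5vp a)).symm)]
      rw [show (∑ a, c a • (vp a * Xm a - Xm a * vp a)) = ∑ a, -(c a • vm a) from
        Finset.sum_congr rfl fun a _ => by
          rw [← neg_sub (Xm a * vp a) (vp a * Xm a), rel_Xmvp a, smul_neg]]
      exact Finset.sum_neg_distrib _
    have C6 : (∑ a, c a • vm a) * (∑ a, Xm a) - (∑ a, Xm a) * (∑ a, c a • vm a) = 0 := by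
      rw [gaudin_comm_one c vm Xm
        (fun a b hab => (ec b a hab.symm _ (m3m b) _ (m5vm a)).symm)]
      exact Finset.sum_eq_zero fun a _ => by rw [rel_Xmvm a, sub_self, smul_zero]
    have C7 : (∑ a, c a • h a) * (∑ a, c a • Xm a) - (∑ a, c a • Xm a) * (∑ a, c a • h a)
        = (-2:ℂ) • ∑ a, (c a * c a) • Xm a := by
      rw [gaudin_comm_sum c c h Xm (fun a b hab => ec a b hab _ (m3h a) _ (m5m b)),
        ← pull (fun a => c a * c a) (-2:ℂ) Xm]
      exact Finset.sum_congr rfl fun a _ => by rw [rel_hXm a]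
    have C7' : (∑ a, c a • h a) * (∑ a, c a • Xm a)
        = (-2:ℂ) • (∑ a, (c a * c a) • Xm a) + (∑ a, c a • Xm a) * (∑ a, c a • h a) :=
      sub_eq_iff_eq_add.mp C7
    have C8 : (∑ a, c a • vm a) * (∑ a, c a • vm a) = -(∑ a, (c a * c a) • Xm a) := by
      have e := gaudin_acomm_sum c c vm vm (fun a b hab => oc a b hab _ (m2m a) _ (m2m b))
      rw [show (∑ a, (c a * c a) • (vm a * vm a + vm a * vm a))
          = (2:ℂ) • -(∑ a, (c a * c a) • Xm a) from by
        rw [smul_neg, ← pull (fun a => c a * c a) (2:ℂ) Xm, ← Finset.sum_neg_distrib]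
        exact Finset.sum_congr rfl fun a _ => by rw [rel_vmvm a]; module] at e
      exact half _ _ (by rw [two_smul]; exact e)
    rw [gaudin_expand_even, C1, C2', C3, C4, C5, C6]
    simp only [mul_zero, zero_mul, add_zero, zero_add, mul_smul_comm, smul_mul_assoc,
      neg_mul, mul_neg, smul_neg, smul_smul]
    rw [C7', C8]
    module
  -- Case 4 : S = ∑ vp
  · have D1 : (∑ a, c a • h a) * (∑ a, vp a) - (∑ a, vp a) * (∑ a, c a • h a)
        = ∑ a, c a • vp a := by
      rw [gaudin_comm_one c h vp (fun a b hab => ec a b hab _ (m3h a) _ (m5vp b))]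
      exact Finset.sum_congr rfl fun a _ => by rw [rel_hvp a]
    have D2 : (∑ a, (c a * c a) • h a) * (∑ a, vp a)
        - (∑ a, vp a) * (∑ a, (c a * c a) • h a)
        = ∑ a, (c a * c a) • vp a := by
      rw [gaudin_comm_one (fun a => c a * c a) h vp
        (fun a b hab => ec a b hab _ (m3h a) _ (m5vp b))]
      exact Finset.sum_congr rfl fun a _ => by rw [rel_hvp a]
    have D2' : (-∑ a, (c a * c a) • h a) * (∑ a, vp a)
        - (∑ a, vp a) * (-∑ a, (c a * c a) • h a)
        = -(∑ a, (c a * c a) • vp a) := negfact _ _ _ D2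
    have D3 : (∑ a, c a • Xp a) * (∑ a, vp a) - (∑ a, vp a) * (∑ a, c a • Xp a) = 0 := by
      rw [gaudin_comm_one c Xp vp (fun a b hab => ec a b hab _ (m3p a) _ (m5vp b))]
      exact Finset.sum_eq_zero fun a _ => by rw [rel_Xpvp a, sub_self, smul_zero]
    have D4 : (∑ a, c a • Xm a) * (∑ a, vp a) - (∑ a, vp a) * (∑ a, c a • Xm a)
        = ∑ a, c a • vm a := by
      rw [gaudin_comm_one c Xm vp (fun a b hab => ec a b hab _ (m3m a) _ (m5vp b))]
      exact Finset.sum_congr rfl fun a _ => by rw [rel_Xmvp a]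
    have D5 : (∑ a, c a • vp a) * (∑ a, vp a) + (∑ a, vp a) * (∑ a, c a • vp a)
        = (2:ℂ) • ∑ a, c a • Xp a := by
      rw [gaudin_acomm_one c vp vp (fun a b hab => oc a b hab _ (m2p a) _ (m2p b)),
        ← pull c (2:ℂ) Xp]
      exact Finset.sum_congr rfl fun a _ => by rw [rel_vpvp a, two_smul ℂ (Xp a)]
    have D6 : (∑ a, c a • vm a) * (∑ a, vp a) + (∑ a, vp a) * (∑ a, c a • vm a)
        = -(∑ a, c a • h a) := by
      rw [gaudin_acomm_one c vm vp (fun a b hab => oc a b hab _ (m2m a) _ (m2p b))]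
      rw [show (∑ a, c a • (vm a * vp a + vp a * vm a)) = ∑ a, -(c a • h a) from
        Finset.sum_congr rfl fun a _ => by
          rw [add_comm (vm a * vp a), rel_vpvm a, smul_neg]]
      exact Finset.sum_neg_distrib _
    have D7 : (∑ a, c a • h a) * (∑ a, c a • vp a) - (∑ a, c a • vp a) * (∑ a, c a • h a)
        = ∑ a, (c a * c a) • vp a := by
      rw [gaudin_comm_sum c c h vp (fun a b hab => ec a b hab _ (m3h a) _ (m5vp b))]
      exact Finset.sum_congr rfl fun a _ => by rw [rel_hvp a]
    have D7' : (∑ a, c a • h a) * (∑ a, c a • vp a)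
        = (∑ a, (c a * c a) • vp a) + (∑ a, c a • vp a) * (∑ a, c a • h a) :=
      sub_eq_iff_eq_add.mp D7
    rw [gaudin_expand_odd, D1, D2', D3, D4, D5, D6]
    simp only [mul_zero, zero_mul, add_zero, zero_add, mul_smul_comm, smul_mul_assoc,
      neg_mul, mul_neg, smul_neg, smul_smul]
    rw [D7']
    module
  -- Case 5 : S = ∑ vm
  · have E1 : (∑ a, c a • h a) * (∑ a, vm a) - (∑ a, vm a) * (∑ a, c a • h a)
        = -(∑ a, c a • vm a) := by
      rw [gaudin_comm_one c h vm (fun a b hab => ec a b hab _ (m3h a) _ (m5vm b))]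
      rw [show (∑ a, c a • (h a * vm a - vm a * h a)) = ∑ a, -(c a • vm a) from
        Finset.sum_congr rfl fun a _ => by rw [rel_hvm a, smul_neg]]
      exact Finset.sum_neg_distrib _
    have E2 : (∑ a, (c a * c a) • h a) * (∑ a, vm a)
        - (∑ a, vm a) * (∑ a, (c a * c a) • h a)
        = -(∑ a, (c a * c a) • vm a) := by
      rw [gaudin_comm_one (fun a => c a * c a) h vm
        (fun a b hab => ec a b hab _ (m3h a) _ (m5vm b))]
      rw [show (∑ a, (c a * c a) • (h a * vm a - vm a * h a))
          = ∑ a, -((c a * c a) • vm a) from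
        Finset.sum_congr rfl fun a _ => by rw [rel_hvm a, smul_neg]]
      exact Finset.sum_neg_distrib _
    have E2' : (-∑ a, (c a * c a) • h a) * (∑ a, vm a)
        - (∑ a, vm a) * (-∑ a, (c a * c a) • h a)
        = -(-(∑ a, (c a * c a) • vm a)) := negfact _ _ _ E2
    have E3 : (∑ a, c a • Xp a) * (∑ a, vm a) - (∑ a, vm a) * (∑ a, c a • Xp a)
        = ∑ a, c a • vp a := by
      rw [gaudin_comm_one c Xp vm (fun a b hab => ec a b hab _ (m3p a) _ (m5vm b))]
      exact Finset.sum_congr rfl fun a _ => by rw [rel_Xpvm a]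
    have E4 : (∑ a, c a • Xm a) * (∑ a, vm a) - (∑ a, vm a) * (∑ a, c a • Xm a) = 0 := by
      rw [gaudin_comm_one c Xm vm (fun a b hab => ec a b hab _ (m3m a) _ (m5vm b))]
      exact Finset.sum_eq_zero fun a _ => by rw [rel_Xmvm a, sub_self, smul_zero]
    have E5 : (∑ a, c a • vp a) * (∑ a, vm a) + (∑ a, vm a) * (∑ a, c a • vp a)
        = -(∑ a, c a • h a) := by
      rw [gaudin_acomm_one c vp vm (fun a b hab => oc a b hab _ (m2p a) _ (m2m b))]
      rw [show (∑ a, c a • (vp a * vm a + vm a * vp a)) = ∑ a, -(c a • h a) from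
        Finset.sum_congr rfl fun a _ => by rw [rel_vpvm a, smul_neg]]
      exact Finset.sum_neg_distrib _
    have E6 : (∑ a, c a • vm a) * (∑ a, vm a) + (∑ a, vm a) * (∑ a, c a • vm a)
        = (-2:ℂ) • ∑ a, c a • Xm a := by
      rw [gaudin_acomm_one c vm vm (fun a b hab => oc a b hab _ (m2m a) _ (m2m b)),
        ← pull c (-2:ℂ) Xm]
      exact Finset.sum_congr rfl fun a _ => by rw [rel_vmvm a]; module
    have E7 : (∑ a, c a • h a) * (∑ a, c a • vm a) - (∑ a, c a • vm a) * (∑ a, c a • h a)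
        = -(∑ a, (c a * c a) • vm a) := by
      rw [gaudin_comm_sum c c h vm (fun a b hab => ec a b hab _ (m3h a) _ (m5vm b))]
      rw [show (∑ a, (c a * c a) • (h a * vm a - vm a * h a))
          = ∑ a, -((c a * c a) • vm a) from
        Finset.sum_congr rfl fun a _ => by rw [rel_hvm a, smul_neg]]
      exact Finset.sum_neg_distrib _
    have E7' : (∑ a, c a • h a) * (∑ a, c a • vm a)
        = -(∑ a, (c a * c a) • vm a) + (∑ a, c a • vm a) * (∑ a, c a • h a) :=
      sub_eq_iff_eq_add.mp E7
    rw [gaudin_expand_odd, E1, E2', E3, E4, E5, E6]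
    simp only [mul_zero, zero_mul, add_zero, zero_add, mul_smul_comm, smul_mul_assoc,
      neg_mul, mul_neg, smul_neg, smul_smul, neg_neg]
    rw [E7']
    module

end aux


/-- t(λ) is invariant under the global osp(1|2) action, i.e. it
commutes with every global generator Y_gl = Σ_a Y_a. -/
theorem tOp_global_invariance {N : ℕ} {H : Type*} [AddCommGroup H] [Module ℂ H]
    (hN : 1 ≤ N) (G : OspGaudinData N H) (lam : ℂ) (hlam : ∀ a, lam ≠ G.z a) :
    (G.tOp lam * (∑ a, G.h a) - (∑ a, G.h a) * G.tOp lam = 0) ∧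
    (G.tOp lam * (∑ a, G.Xp a) - (∑ a, G.Xp a) * G.tOp lam = 0) ∧
    (G.tOp lam * (∑ a, G.Xm a) - (∑ a, G.Xm a) * G.tOp lam = 0) ∧
    (G.tOp lam * (∑ a, G.vp a) - (∑ a, G.vp a) * G.tOp lam = 0) ∧
    (G.tOp lam * (∑ a, G.vm a) - (∑ a, G.vm a) * G.tOp lam = 0) := by
  refine gaudin_key (fun a => (lam - G.z a)⁻¹) G.h G.Xp G.Xm G.vp G.vm
    G.rel_hXp G.rel_hXm G.rel_XpXm G.rel_hvp G.rel_hvm G.rel_vpvm G.rel_Xmvp G.rel_Xpvm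
    G.rel_vpvp G.rel_vmvm G.rel_Xpvp G.rel_Xmvm G.even_comm G.odd_anticomm (G.tOp lam) ?_
  have hsq : ∀ a : Fin N, (((lam - G.z a) ^ 2)⁻¹ : ℂ)
      = (lam - G.z a)⁻¹ * (lam - G.z a)⁻¹ := fun a => by rw [sq, mul_inv]
  simp only [OspGaudinData.tOp, OspGaudinData.hl, OspGaudinData.hl', OspGaudinData.Xpl,
    OspGaudinData.Xml, OspGaudinData.vpl, OspGaudinData.vml, hsq]
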